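/- (Characterization of N-valid implications) If an implication φ → ψ is N-valid, then at least one of the following holds: (1) ψ is N-valid, (2) φ is an atomic formula, or (3) φ is a negation. -/
import Mathlib


/- Formalization of Lorenzen dialogue games, following Felscher's presentation.

   Propositional formulas are built from atoms using ¬, ∧, ∨, →.  A dialogue
   for a formula φ is a sequence of moves beginning with Proponent (P)
   asserting φ at position 0, with O moving at odd positions and P at even
   positions.  Each later move attacks or defends an earlier move of the other
   player, according to the particle rules.  Structural rules (D10, D11, D12,
   D13, E, and the variants D10*, D10′) constrain dialogues further.  P wins
   if P made the last move and no moves are available to O; φ is S-valid if P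
   has an S-winning strategy for φ. -/

namespace LorenzenDialogues

/-- Propositional formulas: atoms, ¬, ∧, ∨, →. -/
inductive Formula : Type
  | atom : ℕ → Formula
  | neg  : Formula → Formula
  | and  : Formula → Formula → Formula
  | or   : Formula → Formula → Formula
  | imp  : Formula → Formula → Formula
deriving DecidableEq

/-- Statements: formulas together with the symbolic attacks `?`, `∧_L`, `∧_R`. -/
inductive Statement : Type
  | form  : Formula → Statement
  | qmark : Statement
  | andL  : Statement
  | andR  : Statement
deriving DecidableEq

/-- Particle rules, attack part: which statements attack which formulas. -/
inductive Attacks : Statement → Formula → Prop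
  | andL (a b : Formula) : Attacks .andL (.and a b)
  | andR (a b : Formula) : Attacks .andR (.and a b)
  | qmark (a b : Formula) : Attacks .qmark (.or a b)
  | imp (a b : Formula) : Attacks (.form a) (.imp a b)
  | neg (a : Formula) : Attacks (.form a) (.neg a)

/-- Particle rules, defense part: `Defends χ a s` means `s` is a permitted
    defense of the formula `χ` against the attack `a`.  (A negation admits
    no defense.) -/
inductive Defends : Formula → Statement → Statement → Prop
  | andL (a b : Formula) : Defends (.and a b) .andL (.form a)
  | andR (a b : Formula) : Defends (.and a b) .andR (.form b)
  | orL (a b : Formula) : Defends (.or a b) .qmark (.form a)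
  | orR (a b : Formula) : Defends (.or a b) .qmark (.form b)
  | imp (a b : Formula) : Defends (.imp a b) (.form a) (.form b)

/-- A move: a statement, a flag recording whether it is an attack (`true`)
    or a defense (`false`), and the position of the earlier move it attacks,
    resp. the earlier attack it defends against. -/
structure Move : Type where
  statement : Statement
  isAttack : Bool
  ref : ℕ
deriving DecidableEq

/-- A dialogue: the initial formula asserted by P at position 0, followed by
    the list of later moves (the move at list index `i` occupies position
    `i + 1`; O moves at odd positions, P at even positions). -/
structure Dialogue : Type where
  initial : Formula
  moves : List Move

/-- The statement asserted at position `n` (if any). -/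
def Dialogue.stmtAt (d : Dialogue) (n : ℕ) : Option Statement :=
  if n = 0 then some (.form d.initial) else (d.moves[n - 1]?).map Move.statement

/-- The move at position `n ≥ 1` (if any); position 0 is the initial assertion,
    not a move. -/
def Dialogue.moveAt (d : Dialogue) (n : ℕ) : Option Move :=
  if n = 0 then none else d.moves[n - 1]?

/-- The move `m`, played at position `n ≥ 1`, is permitted by the particle
    rules: it refers to an earlier position of the other player; if it is an
    attack, it attacks a formula asserted there, and if it is a defense, it
    responds to an attack played there, as the particle rules prescribe. -/
def MoveOK (d : Dialogue) (n : ℕ) (m : Move) : Prop :=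
  m.ref < n ∧ m.ref % 2 ≠ n % 2 ∧
    (m.isAttack = true →
      ∃ ψ, d.stmtAt m.ref = some (.form ψ) ∧ Attacks m.statement ψ) ∧
    (m.isAttack = false →
      ∃ a χ, d.moveAt m.ref = some a ∧ a.isAttack = true ∧
        d.stmtAt a.ref = some (.form χ) ∧ Defends χ a.statement m.statement)

/-- The dialogue adheres to the particle rules (every move is legal). -/
def ParticleOK (d : Dialogue) : Prop :=
  ∀ i m, d.moves[i]? = some m → MoveOK d (i + 1) m

/-- Position `n` carries a defense of the attack made at position `r`. -/
def IsDefenseOf (d : Dialogue) (n r : ℕ) : Prop :=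
  ∃ m, d.moveAt n = some m ∧ m.isAttack = false ∧ m.ref = r

/-- Position `n` carries an attack on the assertion made at position `r`. -/
def IsAttackOn (d : Dialogue) (n r : ℕ) : Prop :=
  ∃ m, d.moveAt n = some m ∧ m.isAttack = true ∧ m.ref = r

/-- Position `n` carries an attack. -/
def IsAttackPos (d : Dialogue) (n : ℕ) : Prop :=
  ∃ m, d.moveAt n = some m ∧ m.isAttack = true

/-- The attack at position `r` is still open (no defense against it has yet
    been played) before position `k`. -/
def OpenAt (d : Dialogue) (r k : ℕ) : Prop :=
  IsAttackPos d r ∧ ¬ ∃ j, j < k ∧ IsDefenseOf d j r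

/-- (D10) P may assert an atomic formula only after it has been asserted by O
    before. -/
def D10 (d : Dialogue) : Prop :=
  ∀ n p, n % 2 = 0 → d.stmtAt n = some (.form (.atom p)) →
    ∃ j, j < n ∧ j % 2 = 1 ∧ d.stmtAt j = some (.form (.atom p))

/-- (D10*) P may assert an atom `p` only if O has asserted `p` or `¬p`
    before. -/
def D10star (d : Dialogue) : Prop :=
  ∀ n p, n % 2 = 0 → d.stmtAt n = some (.form (.atom p)) →
    ∃ j, j < n ∧ j % 2 = 1 ∧
      (d.stmtAt j = some (.form (.atom p)) ∨
        d.stmtAt j = some (.form (.neg (.atom p))))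

/-- (D10′) P may assert an atom `p` only if O has asserted `p` or `¬¬p`
    before. -/
def D10prime (d : Dialogue) : Prop :=
  ∀ n p, n % 2 = 0 → d.stmtAt n = some (.form (.atom p)) →
    ∃ j, j < n ∧ j % 2 = 1 ∧
      (d.stmtAt j = some (.form (.atom p)) ∨
        d.stmtAt j = some (.form (.neg (.neg (.atom p)))))

/-- (D11) When defending, only the most recent open attack may be responded
    to: the attack defended against is open, and no strictly more recent open
    attack (against the same player) exists. -/
def D11 (d : Dialogue) : Prop :=
  ∀ n r, IsDefenseOf d n r →
    OpenAt d r n ∧ ¬ ∃ r', r < r' ∧ r' < n ∧ r' % 2 = r % 2 ∧ OpenAt d r' n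

/-- (D12) An attack may be answered at most once. -/
def D12 (d : Dialogue) : Prop :=
  ∀ n₁ n₂ r, IsDefenseOf d n₁ r → IsDefenseOf d n₂ r → n₁ = n₂

/-- (D13) A P-assertion (made at an even position) may be attacked at most
    once. -/
def D13 (d : Dialogue) : Prop :=
  ∀ n₁ n₂ r, r % 2 = 0 → IsAttackOn d n₁ r → IsAttackOn d n₂ r → n₁ = n₂

/-- (E) O can react only upon the immediately preceding P-statement. -/
def ERule (d : Dialogue) : Prop :=
  ∀ n m, n % 2 = 1 → d.moveAt n = some m → m.ref = n - 1

/-- A ruleset is a set of structural rules, i.e. a predicate on dialogues. -/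
def Ruleset := Dialogue → Prop

/-- Ruleset D = {D10, D11, D12, D13}. -/
def rulesetD : Ruleset := fun d => D10 d ∧ D11 d ∧ D12 d ∧ D13 d

/-- Ruleset E = D ∪ {E}. -/
def rulesetE : Ruleset := fun d => rulesetD d ∧ ERule d

/-- Ruleset CL = E − {D11, D12} = {D10, D13, E}. -/
def rulesetCL : Ruleset := fun d => D10 d ∧ D13 d ∧ ERule d

/-- Ruleset N = D − {D11, D12} = {D10, D13}. -/
def rulesetN : Ruleset := fun d => D10 d ∧ D13 d

/-- Ruleset E* = {D10*, D11, D12, D13, E}. -/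
def rulesetEstar : Ruleset :=
  fun d => D10star d ∧ D11 d ∧ D12 d ∧ D13 d ∧ ERule d

/-- Ruleset E′ = {D10′, D11, D12, D13, E}. -/
def rulesetEprime : Ruleset :=
  fun d => D10prime d ∧ D11 d ∧ D12 d ∧ D13 d ∧ ERule d

/-- An S-dialogue: a dialogue adhering to the particle rules and to the
    structural rules S. -/
def Legal (S : Ruleset) (d : Dialogue) : Prop := ParticleOK d ∧ S d

/-- Extend a dialogue by one move. -/
def Dialogue.extend (d : Dialogue) (m : Move) : Dialogue :=
  ⟨d.initial, d.moves ++ [m]⟩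

/-- The position about to be played. -/
def nextPos (d : Dialogue) : ℕ := d.moves.length + 1

/-- It is P's turn (the next position is even). -/
def PTurn (d : Dialogue) : Prop := nextPos d % 2 = 0

/-- The move `m` legally extends the S-dialogue `d`. -/
def LegalExt (S : Ruleset) (d : Dialogue) (m : Move) : Prop :=
  Legal S (d.extend m)

/-- `PWinningC S C d` holds when P, moving under the additional constraint
    `C` on P's own choices, has a winning strategy in the S-dialogue game
    continuing the dialogue `d`: at P's turn, P has a legal move (satisfying
    `C`) after which P is still winning; at O's turn, every legal O-move
    leads to a position where P is winning (in particular, if no O-move is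
    available, P has won: P made the last move and O cannot move). -/
inductive PWinningC (S : Ruleset) (C : Dialogue → Move → Prop) : Dialogue → Prop
  | pMove (d : Dialogue) (m : Move) (hturn : PTurn d)
      (hm : LegalExt S d m) (hC : C d m)
      (h : PWinningC S C (d.extend m)) : PWinningC S C d
  | oMoves (d : Dialogue) (hturn : ¬ PTurn d)
      (h : ∀ m, LegalExt S d m → PWinningC S C (d.extend m)) :
      PWinningC S C d

/-- P has a winning strategy continuing the S-dialogue `d`. -/
def PWinning (S : Ruleset) (d : Dialogue) : Prop :=
  PWinningC S (fun _ _ => True) d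

/-- `valid S φ` (written `⊨_S φ`): the opening assertion of φ is itself a
    legal S-dialogue and P has an S-winning strategy for φ. -/
def valid (S : Ruleset) (φ : Formula) : Prop :=
  Legal S ⟨φ, []⟩ ∧ PWinning S ⟨φ, []⟩

/-- Derivability in intuitionistic propositional logic (a Hilbert-style
    axiomatization with modus ponens). -/
inductive IProv : Formula → Prop
  | k (a b : Formula) : IProv (.imp a (.imp b a))
  | s (a b c : Formula) :
      IProv (.imp (.imp a (.imp b c)) (.imp (.imp a b) (.imp a c)))
  | andE1 (a b : Formula) : IProv (.imp (.and a b) a)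
  | andE2 (a b : Formula) : IProv (.imp (.and a b) b)
  | andI (a b : Formula) : IProv (.imp a (.imp b (.and a b)))
  | orI1 (a b : Formula) : IProv (.imp a (.or a b))
  | orI2 (a b : Formula) : IProv (.imp b (.or a b))
  | orE (a b c : Formula) :
      IProv (.imp (.imp a c) (.imp (.imp b c) (.imp (.or a b) c)))
  | negI (a b : Formula) :
      IProv (.imp (.imp a b) (.imp (.imp a (.neg b)) (.neg a)))
  | negE (a b : Formula) : IProv (.imp (.neg a) (.imp a b))
  | mp (a b : Formula) : IProv (.imp a b) → IProv a → IProv b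

/-- The stability principle ¬¬p → p for the atom `p`. -/
def stab (p : ℕ) : Formula := .imp (.neg (.neg (.atom p))) (.atom p)

/-- Stable logic: intuitionistic propositional logic plus all instances of
    the stability scheme ¬¬p → p for atoms p, closed under modus ponens. -/
inductive StableProv : Formula → Prop
  | intuit (a : Formula) : IProv a → StableProv a
  | stab (p : ℕ) : StableProv (stab p)
  | mp (a b : Formula) : StableProv (.imp a b) → StableProv a → StableProv b

/-- Boolean evaluation of a formula under a valuation of its atoms. -/
def Formula.eval (v : ℕ → Bool) : Formula → Bool
  | .atom p => v p
  | .neg a => !(a.eval v)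
  | .and a b => a.eval v && b.eval v
  | .or a b => a.eval v || b.eval v
  | .imp a b => !(a.eval v) || b.eval v

/-- A classical tautology: true under every Boolean valuation. -/
def Tautology (φ : Formula) : Prop := ∀ v, φ.eval v = true

/-- Uniform substitution of formulas for atoms, applied homomorphically. -/
def Formula.subst (σ : ℕ → Formula) : Formula → Formula
  | .atom p => σ p
  | .neg a => .neg (a.subst σ)
  | .and a b => .and (a.subst σ) (b.subst σ)
  | .or a b => .or (a.subst σ) (b.subst σ)
  | .imp a b => .imp (a.subst σ) (b.subst σ)

/-- The atoms occurring in a formula. -/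
def Formula.atoms : Formula → List ℕ
  | .atom p => [p]
  | .neg a => a.atoms
  | .and a b => a.atoms ++ b.atoms
  | .or a b => a.atoms ++ b.atoms
  | .imp a b => a.atoms ++ b.atoms

/-- Conjunction of a nonempty list of formulas. -/
def conjList (f : Formula) : List Formula → Formula
  | [] => f
  | g :: gs => .and f (conjList g gs)

/-- The conjunction (¬¬p → p) ∧ … of stability instances for the atoms
    `p :: ps`. -/
def stabConj (p : ℕ) (ps : List ℕ) : Formula :=
  conjList (stab p) (ps.map stab)


/- ===================== AUXILIARY MATERIAL ===================== -/

section Aux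

abbrev Win (d : Dialogue) : Prop := PWinningC rulesetN (fun _ _ => True) d

lemma moves_extend (d : Dialogue) (m : Move) : (d.extend m).moves = d.moves ++ [m] := rfl

lemma initial_extend (d : Dialogue) (m : Move) : (d.extend m).initial = d.initial := rfl

lemma stmtAt_zero (d : Dialogue) : d.stmtAt 0 = some (.form d.initial) := by
  simp [Dialogue.stmtAt]

lemma stmtAt_some_le {d : Dialogue} {n : ℕ} {s : Statement} (h : d.stmtAt n = some s) :
    n ≤ d.moves.length := by
  rcases eq_or_ne n 0 with rfl | h0
  · omega
  · unfold Dialogue.stmtAt at h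
    rw [if_neg h0] at h
    rcases Option.map_eq_some_iff.mp h with ⟨m, hm, -⟩
    have := (List.getElem?_eq_some_iff.mp hm).1
    omega

lemma moveAt_bounds {d : Dialogue} {n : ℕ} {m : Move} (h : d.moveAt n = some m) :
    1 ≤ n ∧ n ≤ d.moves.length := by
  rcases eq_or_ne n 0 with rfl | h0
  · simp [Dialogue.moveAt] at h
  · unfold Dialogue.moveAt at h
    rw [if_neg h0] at h
    have := (List.getElem?_eq_some_iff.mp h).1
    omega

lemma stmtAt_of_moveAt {d : Dialogue} {n : ℕ} {m : Move} (h : d.moveAt n = some m) :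
    d.stmtAt n = some m.statement := by
  have hb := moveAt_bounds h
  unfold Dialogue.moveAt at h
  unfold Dialogue.stmtAt
  rw [if_neg (by omega)] at h ⊢
  rw [h]; rfl

lemma stmtAt_extend_le {d : Dialogue} (m : Move) {n : ℕ} (h : n ≤ d.moves.length) :
    (d.extend m).stmtAt n = d.stmtAt n := by
  unfold Dialogue.stmtAt
  rcases eq_or_ne n 0 with rfl | h0
  · simp [Dialogue.extend]
  · have hlt : n - 1 < d.moves.length := by omega
    simp only [if_neg h0, Dialogue.extend]
    rw [List.getElem?_append, if_pos hlt]

lemma stmtAt_extend_last (d : Dialogue) (m : Move) :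
    (d.extend m).stmtAt (d.moves.length + 1) = some m.statement := by
  unfold Dialogue.stmtAt Dialogue.extend
  rw [if_neg (by omega)]
  simp

lemma moveAt_extend_le {d : Dialogue} (m : Move) {n : ℕ} (h : n ≤ d.moves.length) :
    (d.extend m).moveAt n = d.moveAt n := by
  unfold Dialogue.moveAt
  rcases eq_or_ne n 0 with rfl | h0
  · simp
  · have hlt : n - 1 < d.moves.length := by omega
    simp only [if_neg h0, Dialogue.extend]
    rw [List.getElem?_append, if_pos hlt]

lemma moveAt_extend_last (d : Dialogue) (m : Move) :
    (d.extend m).moveAt (d.moves.length + 1) = some m := by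
  unfold Dialogue.moveAt Dialogue.extend
  rw [if_neg (by omega)]
  simp

lemma stmtAt_extend_some_le {d : Dialogue} {m : Move} {n : ℕ} {s : Statement}
    (h : (d.extend m).stmtAt n = some s) : n ≤ d.moves.length + 1 := by
  have := stmtAt_some_le h
  simpa [Dialogue.extend] using this

lemma moveAt_extend_bounds {d : Dialogue} {m : Move} {n : ℕ} {m' : Move}
    (h : (d.extend m).moveAt n = some m') : 1 ≤ n ∧ n ≤ d.moves.length + 1 := by
  have := moveAt_bounds h
  simpa [Dialogue.extend] using this

/-- O asserted the formula χ somewhere. -/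
def OA (x : Dialogue) (χ : Formula) : Prop :=
  ∃ j, j % 2 = 1 ∧ x.stmtAt j = some (.form χ)

/-- There is an O-attack (at an odd position) on a P-assertion of χ, with
    attack statement α. -/
def OAttC (x : Dialogue) (χ : Formula) (α : Statement) : Prop :=
  ∃ n m, x.moveAt n = some m ∧ n % 2 = 1 ∧ m.isAttack = true ∧ m.statement = α ∧
    x.stmtAt m.ref = some (.form χ)

/-- There is a P-attack (at an even position) on an O-assertion of χ, with
    attack statement α. -/
def PAttC (x : Dialogue) (χ : Formula) (α : Statement) : Prop :=
  ∃ n m, x.moveAt n = some m ∧ n % 2 = 0 ∧ m.isAttack = true ∧ m.statement = α ∧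
    x.stmtAt m.ref = some (.form χ)

/-- Position r has been attacked. -/
def attackedIn (x : Dialogue) (r : ℕ) : Prop :=
  ∃ n m, x.moveAt n = some m ∧ m.isAttack = true ∧ m.ref = r

lemma OA_extend (d : Dialogue) (m : Move) (χ : Formula) :
    OA (d.extend m) χ ↔
      OA d χ ∨ ((d.moves.length + 1) % 2 = 1 ∧ m.statement = .form χ) := by
  constructor
  · rintro ⟨j, hj, hst⟩
    have hb := stmtAt_extend_some_le hst
    rcases eq_or_ne j (d.moves.length + 1) with rfl | hne
    · rw [stmtAt_extend_last] at hst
      exact Or.inr ⟨hj, by injection hst⟩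
    · rw [stmtAt_extend_le m (by omega)] at hst
      exact Or.inl ⟨j, hj, hst⟩
  · rintro (⟨j, hj, hst⟩ | ⟨hpar, hst⟩)
    · exact ⟨j, hj, by rw [stmtAt_extend_le m (stmtAt_some_le hst)]; exact hst⟩
    · exact ⟨d.moves.length + 1, hpar, by rw [stmtAt_extend_last, hst]⟩

lemma moveAt_ok {d : Dialogue} (hp : ParticleOK d) {n : ℕ} {m : Move}
    (h : d.moveAt n = some m) : MoveOK d n m := by
  have hb := moveAt_bounds h
  unfold Dialogue.moveAt at h
  rw [if_neg (by omega)] at h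
  have := hp (n - 1) m h
  have hn : n - 1 + 1 = n := by omega
  rwa [hn] at this

lemma moveOK_ref_lt {d : Dialogue} {n : ℕ} {m : Move} (h : MoveOK d n m) : m.ref < n := h.1

lemma attC_extend_aux {d : Dialogue} {m : Move} (hpd : ParticleOK d) (b : ℕ)
    (hr : m.ref ≤ d.moves.length)
    (χ : Formula) (α : Statement) :
    (∃ n m', (d.extend m).moveAt n = some m' ∧ n % 2 = b ∧ m'.isAttack = true ∧
        m'.statement = α ∧ (d.extend m).stmtAt m'.ref = some (.form χ)) ↔
      ((∃ n m', d.moveAt n = some m' ∧ n % 2 = b ∧ m'.isAttack = true ∧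
        m'.statement = α ∧ d.stmtAt m'.ref = some (.form χ)) ∨
       ((d.moves.length + 1) % 2 = b ∧ m.isAttack = true ∧ m.statement = α ∧
        d.stmtAt m.ref = some (.form χ))) := by
  constructor
  · rintro ⟨n, m', hmv, hpar, hatk, hstm, hst⟩
    have hb := moveAt_extend_bounds hmv
    rcases eq_or_ne n (d.moves.length + 1) with rfl | hne
    · rw [moveAt_extend_last] at hmv
      injection hmv with hmv; subst hmv
      rw [stmtAt_extend_le m hr] at hst
      exact Or.inr ⟨hpar, hatk, hstm, hst⟩
    · rw [moveAt_extend_le m (by omega)] at hmv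
      have hrb : m'.ref ≤ d.moves.length := by
        have := moveOK_ref_lt (moveAt_ok hpd hmv)
        have := (moveAt_bounds hmv).2
        omega
      rw [stmtAt_extend_le m hrb] at hst
      exact Or.inl ⟨n, m', hmv, hpar, hatk, hstm, hst⟩
  · rintro (⟨n, m', hmv, hpar, hatk, hstm, hst⟩ | ⟨hpar, hatk, hstm, hst⟩)
    · refine ⟨n, m', ?_, hpar, hatk, hstm, ?_⟩
      · rw [moveAt_extend_le m (moveAt_bounds hmv).2]; exact hmv
      · rw [stmtAt_extend_le m (stmtAt_some_le hst)]; exact hst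
    · refine ⟨d.moves.length + 1, m, moveAt_extend_last d m, hpar, hatk, hstm, ?_⟩
      rw [stmtAt_extend_le m hr]; exact hst

lemma OAttC_extend {d : Dialogue} {m : Move} (hpd : ParticleOK d)
    (hr : m.ref ≤ d.moves.length) (χ : Formula) (α : Statement) :
    OAttC (d.extend m) χ α ↔
      (OAttC d χ α ∨ ((d.moves.length + 1) % 2 = 1 ∧ m.isAttack = true ∧
        m.statement = α ∧ d.stmtAt m.ref = some (.form χ))) :=
  attC_extend_aux hpd 1 hr χ α

lemma PAttC_extend {d : Dialogue} {m : Move} (hpd : ParticleOK d)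
    (hr : m.ref ≤ d.moves.length) (χ : Formula) (α : Statement) :
    PAttC (d.extend m) χ α ↔
      (PAttC d χ α ∨ ((d.moves.length + 1) % 2 = 0 ∧ m.isAttack = true ∧
        m.statement = α ∧ d.stmtAt m.ref = some (.form χ))) :=
  attC_extend_aux hpd 0 hr χ α

lemma attackedIn_extend (d : Dialogue) (m : Move) (r : ℕ) :
    attackedIn (d.extend m) r ↔ attackedIn d r ∨ (m.isAttack = true ∧ m.ref = r) := by
  constructor
  · rintro ⟨n, m', hmv, hatk, hrf⟩
    have hb := moveAt_extend_bounds hmv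
    rcases eq_or_ne n (d.moves.length + 1) with rfl | hne
    · rw [moveAt_extend_last] at hmv
      injection hmv with hmv; subst hmv
      exact Or.inr ⟨hatk, hrf⟩
    · rw [moveAt_extend_le m (by omega)] at hmv
      exact Or.inl ⟨n, m', hmv, hatk, hrf⟩
  · rintro (⟨n, m', hmv, hatk, hrf⟩ | ⟨hatk, hrf⟩)
    · exact ⟨n, m', by rw [moveAt_extend_le m (moveAt_bounds hmv).2]; exact hmv, hatk, hrf⟩
    · exact ⟨d.moves.length + 1, m, moveAt_extend_last d m, hatk, hrf⟩

lemma attackedIn_lt {d : Dialogue} {r : ℕ} (hpd : ParticleOK d) (h : attackedIn d r) :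
    r < d.moves.length + 1 := by
  rcases h with ⟨n, m', hmv, -, hrf⟩
  have := moveOK_ref_lt (moveAt_ok hpd hmv)
  have := (moveAt_bounds hmv).2
  omega

/-- transfer of MoveOK to an extension (for positions already present). -/
lemma moveOK_extend {d : Dialogue} {m : Move} {n : ℕ} {m' : Move}
    (hn : n ≤ d.moves.length + 1) (hpd : ParticleOK d) (h : MoveOK d n m') :
    MoveOK (d.extend m) n m' := by
  obtain ⟨h1, h2, h3, h4⟩ := h
  refine ⟨h1, h2, ?_, ?_⟩
  · intro ha
    obtain ⟨χ, hst, hatk⟩ := h3 ha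
    exact ⟨χ, by rw [stmtAt_extend_le m (stmtAt_some_le hst)]; exact hst, hatk⟩
  · intro ha
    obtain ⟨a, χ, hma, haat, hstm, hdfd⟩ := h4 ha
    refine ⟨a, χ, ?_, haat, ?_, hdfd⟩
    · rw [moveAt_extend_le m (moveAt_bounds hma).2]; exact hma
    · rw [stmtAt_extend_le m (stmtAt_some_le hstm)]; exact hstm

lemma moveOK_of_extend {d : Dialogue} {m : Move} {n : ℕ} {m' : Move}
    (hn : n ≤ d.moves.length + 1) (hpd : ParticleOK d)
    (h : MoveOK (d.extend m) n m') : MoveOK d n m' := by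
  obtain ⟨h1, h2, h3, h4⟩ := h
  refine ⟨h1, h2, ?_, ?_⟩
  · intro ha
    obtain ⟨χ, hst, hatk⟩ := h3 ha
    rw [stmtAt_extend_le m (by omega)] at hst
    exact ⟨χ, hst, hatk⟩
  · intro ha
    obtain ⟨a, χ, hma, haat, hstm, hdfd⟩ := h4 ha
    have hrb : m'.ref ≤ d.moves.length := by omega
    rw [moveAt_extend_le m hrb] at hma
    have harb : a.ref < m'.ref := moveOK_ref_lt (moveAt_ok hpd hma)
    rw [stmtAt_extend_le m (by omega)] at hstm
    exact ⟨a, χ, hma, haat, hstm, hdfd⟩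

/-- variant using legality of the extension instead. -/
lemma moveOK_of_extend' {d : Dialogue} {m : Move} {n : ℕ} {m' : Move}
    (hn : n ≤ d.moves.length + 1) (hpe : ParticleOK (d.extend m))
    (h : MoveOK (d.extend m) n m') : MoveOK d n m' := by
  obtain ⟨h1, h2, h3, h4⟩ := h
  refine ⟨h1, h2, ?_, ?_⟩
  · intro ha
    obtain ⟨χ, hst, hatk⟩ := h3 ha
    rw [stmtAt_extend_le m (by omega)] at hst
    exact ⟨χ, hst, hatk⟩
  · intro ha
    obtain ⟨a, χ, hma, haat, hstm, hdfd⟩ := h4 ha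
    have hrb : m'.ref ≤ d.moves.length := by omega
    have harb : a.ref < m'.ref := moveOK_ref_lt (moveAt_ok hpe hma)
    rw [moveAt_extend_le m hrb] at hma
    rw [stmtAt_extend_le m (by omega)] at hstm
    exact ⟨a, χ, hma, haat, hstm, hdfd⟩

lemma particleOK_extend (d : Dialogue) (m : Move) :
    ParticleOK (d.extend m) ↔
      ParticleOK d ∧ MoveOK d (d.moves.length + 1) m := by
  constructor
  · intro hpe
    have hpd : ParticleOK d := by
      intro i m' hi
      have hi' : (d.extend m).moves[i]? = some m' := by
        have hilt := (List.getElem?_eq_some_iff.mp hi).1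
        rw [moves_extend, List.getElem?_append, if_pos hilt]; exact hi
      have hok := hpe i m' hi'
      have hib := (List.getElem?_eq_some_iff.mp hi).1
      exact moveOK_of_extend' (by omega) hpe hok
    exact ⟨hpd, by
      have hlast : (d.extend m).moves[d.moves.length]? = some m := by
        rw [moves_extend]; simp
      exact moveOK_of_extend' (le_refl _) hpe (hpe d.moves.length m hlast)⟩
  · rintro ⟨hpd, hok⟩
    intro i m' hi
    rw [moves_extend] at hi
    rcases Nat.lt_or_ge i d.moves.length with hlt | hge
    · rw [List.getElem?_append, if_pos hlt] at hi
      exact moveOK_extend (by omega) hpd (hpd i m' hi)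
    · have hib := (List.getElem?_eq_some_iff.mp hi).1
      simp [moves_extend] at hib
      have : i = d.moves.length := by omega
      subst this
      rw [List.getElem?_append, if_neg (by omega)] at hi
      simp at hi
      subst hi
      exact moveOK_extend (le_refl _) hpd hok

/-- what rule D10 requires of the newly added move. -/
def D10New (d : Dialogue) (m : Move) : Prop :=
  (d.moves.length + 1) % 2 = 0 → ∀ p, m.statement = .form (.atom p) →
    ∃ j, j < d.moves.length + 1 ∧ j % 2 = 1 ∧ d.stmtAt j = some (.form (.atom p))

/-- what rule D13 requires of the newly added move. -/
def D13New (d : Dialogue) (m : Move) : Prop :=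
  m.isAttack = true → m.ref % 2 = 0 → ¬ attackedIn d m.ref

lemma isAttackOn_extend (d : Dialogue) (m : Move) (n r : ℕ) :
    IsAttackOn (d.extend m) n r ↔
      IsAttackOn d n r ∨ (n = d.moves.length + 1 ∧ m.isAttack = true ∧ m.ref = r) := by
  constructor
  · rintro ⟨m', hmv, hatk, hrf⟩
    have hb := moveAt_extend_bounds hmv
    rcases eq_or_ne n (d.moves.length + 1) with rfl | hne
    · rw [moveAt_extend_last] at hmv
      injection hmv with hmv; subst hmv
      exact Or.inr ⟨rfl, hatk, hrf⟩
    · rw [moveAt_extend_le m (by omega)] at hmv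
      exact Or.inl ⟨m', hmv, hatk, hrf⟩
  · rintro (⟨m', hmv, hatk, hrf⟩ | ⟨rfl, hatk, hrf⟩)
    · exact ⟨m', by rw [moveAt_extend_le m (moveAt_bounds hmv).2]; exact hmv, hatk, hrf⟩
    · exact ⟨m, moveAt_extend_last d m, hatk, hrf⟩

lemma D10_extend (d : Dialogue) (m : Move) :
    D10 (d.extend m) ↔ D10 d ∧ D10New d m := by
  constructor
  · intro h10
    constructor
    · intro n p hn hst
      have hb := stmtAt_some_le hst
      rw [← stmtAt_extend_le m hb] at hst
      obtain ⟨j, hj1, hj2, hj3⟩ := h10 n p hn hst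
      rw [stmtAt_extend_le m (by omega)] at hj3
      exact ⟨j, hj1, hj2, hj3⟩
    · intro hpar p hst
      have : (d.extend m).stmtAt (d.moves.length + 1) = some (.form (.atom p)) := by
        rw [stmtAt_extend_last, hst]
      obtain ⟨j, hj1, hj2, hj3⟩ := h10 _ p hpar this
      rw [stmtAt_extend_le m (by omega)] at hj3
      exact ⟨j, hj1, hj2, hj3⟩
  · rintro ⟨h10, hnew⟩ n p hn hst
    have hb := stmtAt_extend_some_le hst
    rcases eq_or_ne n (d.moves.length + 1) with rfl | hne
    · rw [stmtAt_extend_last] at hst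
      injection hst with hst
      obtain ⟨j, hj1, hj2, hj3⟩ := hnew hn p hst
      exact ⟨j, hj1, hj2, by rw [stmtAt_extend_le m (stmtAt_some_le hj3)]; exact hj3⟩
    · rw [stmtAt_extend_le m (by omega)] at hst
      obtain ⟨j, hj1, hj2, hj3⟩ := h10 n p hn hst
      exact ⟨j, hj1, hj2, by rw [stmtAt_extend_le m (stmtAt_some_le hj3)]; exact hj3⟩

lemma D13_extend (d : Dialogue) (m : Move) :
    D13 (d.extend m) ↔ D13 d ∧ D13New d m := by
  constructor
  · intro h13
    constructor
    · intro n₁ n₂ r hr h1 h2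
      apply h13 n₁ n₂ r hr
      · exact (isAttackOn_extend d m n₁ r).2 (Or.inl h1)
      · exact (isAttackOn_extend d m n₂ r).2 (Or.inl h2)
    · intro hatk hr hcon
      obtain ⟨n₀, m', hmv, hatk', hrf⟩ := hcon
      have : n₀ = d.moves.length + 1 := by
        apply h13 n₀ (d.moves.length + 1) m.ref hr
        · exact (isAttackOn_extend d m n₀ m.ref).2 (Or.inl ⟨m', hmv, hatk', hrf⟩)
        · exact (isAttackOn_extend d m _ m.ref).2 (Or.inr ⟨rfl, hatk, rfl⟩)
      have := (moveAt_bounds hmv).2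
      omega
  · rintro ⟨h13, hnew⟩ n₁ n₂ r hr h1 h2
    rcases (isAttackOn_extend d m n₁ r).1 h1 with h1' | ⟨rfl, hatk1, hrf1⟩
    · rcases (isAttackOn_extend d m n₂ r).1 h2 with h2' | ⟨rfl, hatk2, hrf2⟩
      · exact h13 n₁ n₂ r hr h1' h2'
      · exfalso
        exact hnew hatk2 (hrf2 ▸ hr) (by
          obtain ⟨m', hmv, ha, hf⟩ := h1'
          exact ⟨n₁, m', hmv, ha, by rw [hf, ← hrf2]⟩)
    · rcases (isAttackOn_extend d m n₂ r).1 h2 with h2' | ⟨rfl, hatk2, hrf2⟩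
      · exfalso
        exact hnew hatk1 (hrf1 ▸ hr) (by
          obtain ⟨m', hmv, ha, hf⟩ := h2'
          exact ⟨n₂, m', hmv, ha, by rw [hf, ← hrf1]⟩)
      · rfl

/-- The master decomposition of legality of a one-move extension, for
    ruleset N. -/
lemma legalExt_iff {d : Dialogue} (hd : Legal rulesetN d) (m : Move) :
    LegalExt rulesetN d m ↔
      (MoveOK d (d.moves.length + 1) m ∧ D10New d m ∧ D13New d m) := by
  obtain ⟨hpd, h10, h13⟩ := hd
  constructor
  · rintro ⟨hpe, h10e, h13e⟩
    exact ⟨((particleOK_extend d m).1 hpe).2, ((D10_extend d m).1 h10e).2,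
      ((D13_extend d m).1 h13e).2⟩
  · rintro ⟨hok, h10n, h13n⟩
    exact ⟨(particleOK_extend d m).2 ⟨hpd, hok⟩, (D10_extend d m).2 ⟨h10, h10n⟩,
      (D13_extend d m).2 ⟨h13, h13n⟩⟩

lemma legal_of_legalExt {d : Dialogue} {m : Move} (h : LegalExt rulesetN d m) :
    Legal rulesetN (d.extend m) := h

lemma defends_is_form {χ : Formula} {α s : Statement} (h : Defends χ α s) :
    ∃ σ, s = .form σ := by
  cases h <;> exact ⟨_, rfl⟩

lemma no_defends_neg {χ : Formula} {α s : Statement} (h : Defends (.neg χ) α s) : False := by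
  cases h

lemma defends_imp_inv {a b : Formula} {α s : Statement} (h : Defends (.imp a b) α s) :
    s = .form b := by
  cases h; rfl

lemma attacks_neg_inv {a : Formula} {α : Statement} (h : Attacks α (.neg a)) :
    α = .form a := by
  cases h; rfl

lemma exists_defends_of_attacks {χ : Formula} {α : Statement} (h : Attacks α χ)
    (hn : ∀ a, χ ≠ .neg a) : ∃ s, Defends χ α s := by
  cases h with
  | andL a b => exact ⟨_, Defends.andL a b⟩
  | andR a b => exact ⟨_, Defends.andR a b⟩
  | qmark a b => exact ⟨_, Defends.orL a b⟩
  | imp a b => exact ⟨_, Defends.imp a b⟩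
  | neg a => exact absurd rfl (hn a)

lemma OAttC_attacks {e : Dialogue} (hpe : ParticleOK e) {χ : Formula} {α : Statement}
    (h : OAttC e χ α) : Attacks α χ := by
  obtain ⟨n, b, hmv, hpar, hatk, hstm, hst⟩ := h
  have hok := moveAt_ok hpe hmv
  obtain ⟨χ₀, hst₀, hatk₀⟩ := hok.2.2.1 hatk
  rw [hst] at hst₀
  injection hst₀ with hst₀
  injection hst₀ with hst₀
  subst hst₀; subst hstm
  exact hatk₀

/-- "P has attacked a formula that admits a defense": a fatal property, since
    O can then always move. -/
def BadP (d : Dialogue) : Prop :=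
  ∃ n m χ s, d.moveAt n = some m ∧ n % 2 = 0 ∧ m.isAttack = true ∧
    d.stmtAt m.ref = some (.form χ) ∧ Defends χ m.statement s

lemma badP_extend {d : Dialogue} (m : Move) (h : BadP d) : BadP (d.extend m) := by
  obtain ⟨n, m', χ, s, hmv, hpar, hatk, hst, hdfd⟩ := h
  exact ⟨n, m', χ, s, by rw [moveAt_extend_le m (moveAt_bounds hmv).2]; exact hmv, hpar,
    hatk, by rw [stmtAt_extend_le m (stmtAt_some_le hst)]; exact hst, hdfd⟩

/-- Lemma A: from a position where P has attacked a defensible formula,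
    P cannot have a winning strategy, because O can re-defend forever. -/
lemma lemA {d : Dialogue} (h : Win d) : Legal rulesetN d → BadP d → False := by
  induction h with
  | pMove d m hturn hm hC hsub ih =>
      intro hleg hbad
      exact ih (legal_of_legalExt hm) (badP_extend m hbad)
  | oMoves d hturn hsub ih =>
      intro hleg hbad
      obtain ⟨n, m', χ, s, hmv, hpar, hatk, hst, hdfd⟩ := hbad
      -- O can defend the attack at position n once more
      set mdef : Move := ⟨s, false, n⟩ with hmdef
      have hnb := moveAt_bounds hmv
      have hnp : (d.moves.length + 1) % 2 = 1 := by
        have : ¬ (d.moves.length + 1) % 2 = 0 := hturn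
        omega
      have hok : MoveOK d (d.moves.length + 1) mdef := by
        refine ⟨by show n < d.moves.length + 1; omega,
          by show n % 2 ≠ (d.moves.length + 1) % 2; omega, ?_, ?_⟩
        · intro hcon; simp [hmdef] at hcon
        · intro _
          exact ⟨m', χ, hmv, hatk, hst, hdfd⟩
      have hlegext : LegalExt rulesetN d mdef := by
        rw [legalExt_iff hleg]
        refine ⟨hok, ?_, ?_⟩
        · intro hcon; omega
        · intro hcon; simp [hmdef] at hcon
      exact ih mdef hlegext (legal_of_legalExt hlegext) (badP_extend mdef
        ⟨n, m', χ, s, hmv, hpar, hatk, hst, hdfd⟩)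

/-- The simulation invariant between a dialogue `d` for `φ → ψ` and a
    dialogue `e` for `ψ`. -/
structure SimCore (φ ψ : Formula) (d e : Dialogue) (ι : ℕ → ℕ) : Prop where
  einit : e.initial = ψ
  legal_d : Legal rulesetN d
  legal_e : Legal rulesetN e
  hOA : ∀ χ, OA d χ ↔ (OA e χ ∨ χ = φ)
  hOAtt : ∀ χ α, OAttC d χ α ↔ (OAttC e χ α ∨ (χ = .imp φ ψ ∧ α = .form φ))
  hPAtt : ∀ χ α, PAttC e χ α → ∃ χ', χ = .neg χ'
  hA5 : e.moves ≠ [] → ∃ β, OAttC e ψ β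
  hmap : ∀ p, p % 2 = 0 → (e.stmtAt p).isSome →
      (ι p) % 2 = 0 ∧ d.stmtAt (ι p) = e.stmtAt p ∧
        (attackedIn d (ι p) ↔ attackedIn e p)
  hinj : ∀ p q, p % 2 = 0 → q % 2 = 0 → (e.stmtAt p).isSome → (e.stmtAt q).isSome →
      ι p = ι q → p = q

def Aligned (d e : Dialogue) : Prop := nextPos d % 2 = nextPos e % 2

def Mis (ψ : Formula) (d e : Dialogue) (ι : ℕ → ℕ) : Prop :=
  nextPos e % 2 = 0 ∧ nextPos d % 2 = 1 ∧
  ∃ c, c % 2 = 0 ∧ d.stmtAt c = some (.form ψ) ∧ ¬ attackedIn d c ∧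
    ∀ p, p % 2 = 0 → (e.stmtAt p).isSome → ι p ≠ c

lemma nextPos_eq (d : Dialogue) : nextPos d = d.moves.length + 1 := rfl

lemma ne_nil_of_odd_len {e : Dialogue} (h : (e.moves.length + 1) % 2 = 0) :
    e.moves ≠ [] := by
  intro h0
  rw [h0] at h
  simp at h

lemma simcore_step_P {φ ψ : Formula} {d e : Dialogue} {ι : ℕ → ℕ}
    (hs : SimCore φ ψ d e ι) (m_d m_e : Move)
    (hstmt : m_e.statement = m_d.statement)
    (hnpd : (d.moves.length + 1) % 2 = 0)
    (hnpe : (e.moves.length + 1) % 2 = 0)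
    (hrd : m_d.ref ≤ d.moves.length) (hre : m_e.ref ≤ e.moves.length)
    (hrdodd : m_d.ref % 2 = 1) (hreodd : m_e.ref % 2 = 1)
    (hld : Legal rulesetN (d.extend m_d)) (hle : Legal rulesetN (e.extend m_e))
    (hneg : m_e.isAttack = true → ∀ χ, e.stmtAt m_e.ref = some (.form χ) →
      ∃ χ', χ = .neg χ') :
    SimCore φ ψ (d.extend m_d) (e.extend m_e)
      (Function.update ι (e.moves.length + 1) (d.moves.length + 1)) := by
  have hpd : ParticleOK d := hs.legal_d.1
  have hpe : ParticleOK e := hs.legal_e.1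
  refine ⟨?_, hld, hle, ?_, ?_, ?_, ?_, ?_, ?_⟩
  · exact hs.einit
  · intro χ
    rw [OA_extend, OA_extend]
    constructor
    · rintro (h | ⟨hp, -⟩)
      · rcases (hs.hOA χ).1 h with h' | h'
        · exact Or.inl (Or.inl h')
        · exact Or.inr h'
      · omega
    · rintro (( h | ⟨hp, -⟩) | h)
      · exact Or.inl ((hs.hOA χ).2 (Or.inl h))
      · omega
      · exact Or.inl ((hs.hOA χ).2 (Or.inr h))
  · intro χ α
    rw [OAttC_extend hpd hrd, OAttC_extend hpe hre]
    constructor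
    · rintro (h | ⟨hp, -⟩)
      · rcases (hs.hOAtt χ α).1 h with h' | h'
        · exact Or.inl (Or.inl h')
        · exact Or.inr h'
      · omega
    · rintro ((h | ⟨hp, -⟩) | h)
      · exact Or.inl ((hs.hOAtt χ α).2 (Or.inl h))
      · omega
      · exact Or.inl ((hs.hOAtt χ α).2 (Or.inr h))
  · intro χ α h
    rcases (PAttC_extend hpe hre χ α).1 h with h' | ⟨-, hatk, -, hst⟩
    · exact hs.hPAtt χ α h'
    · exact hneg hatk χ hst
  · intro _
    obtain ⟨β, hβ⟩ := hs.hA5 (ne_nil_of_odd_len hnpe)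
    exact ⟨β, (OAttC_extend hpe hre ψ β).2 (Or.inl hβ)⟩
  · intro p hp hsome
    rcases Option.isSome_iff_exists.mp hsome with ⟨s, hst⟩
    have hb := stmtAt_extend_some_le hst
    rcases eq_or_ne p (e.moves.length + 1) with rfl | hne
    · rw [Function.update_self]
      refine ⟨hnpd, ?_, ?_⟩
      · rw [stmtAt_extend_last, stmtAt_extend_last, hstmt]
      · constructor
        · intro hcon
          rcases (attackedIn_extend d m_d _).1 hcon with h' | ⟨-, hrf⟩
          · exact absurd (attackedIn_lt hpd h') (by omega)
          · omega
        · intro hcon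
          rcases (attackedIn_extend e m_e _).1 hcon with h' | ⟨-, hrf⟩
          · exact absurd (attackedIn_lt hpe h') (by omega)
          · omega
    · have hple : p ≤ e.moves.length := by omega
      rw [Function.update_of_ne hne]
      rw [stmtAt_extend_le m_e hple] at hst ⊢
      have hm := hs.hmap p hp (by rw [hst]; rfl)
      have hiple : ι p ≤ d.moves.length := by
        have := hm.2.1
        rw [hst] at this
        exact stmtAt_some_le this
      refine ⟨hm.1, ?_, ?_⟩
      · rw [stmtAt_extend_le m_d hiple]; exact hm.2.1
      · rw [attackedIn_extend, attackedIn_extend]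
        constructor
        · rintro (h' | ⟨-, hrf⟩)
          · exact Or.inl (hm.2.2.1 h')
          · exfalso; have := hm.1; omega
        · rintro (h' | ⟨-, hrf⟩)
          · exact Or.inl (hm.2.2.2 h')
          · exfalso; omega
  · intro p q hp hq hsp hsq heq
    rcases Option.isSome_iff_exists.mp hsp with ⟨s₁, hst₁⟩
    rcases Option.isSome_iff_exists.mp hsq with ⟨s₂, hst₂⟩
    have hb₁ := stmtAt_extend_some_le hst₁
    have hb₂ := stmtAt_extend_some_le hst₂
    rcases eq_or_ne p (e.moves.length + 1) with rfl | hnep <;>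
      rcases eq_or_ne q (e.moves.length + 1) with rfl | hneq
    · rfl
    · exfalso
      rw [Function.update_self, Function.update_of_ne hneq] at heq
      rw [stmtAt_extend_le m_e (by omega)] at hst₂
      have hm := hs.hmap q hq (by rw [hst₂]; rfl)
      have : ι q ≤ d.moves.length := by
        have := hm.2.1; rw [hst₂] at this; exact stmtAt_some_le this
      omega
    · exfalso
      rw [Function.update_self, Function.update_of_ne hnep] at heq
      rw [stmtAt_extend_le m_e (by omega)] at hst₁
      have hm := hs.hmap p hp (by rw [hst₁]; rfl)
      have : ι p ≤ d.moves.length := by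
        have := hm.2.1; rw [hst₁] at this; exact stmtAt_some_le this
      omega
    · rw [Function.update_of_ne hnep, Function.update_of_ne hneq] at heq
      rw [stmtAt_extend_le m_e (by omega)] at hst₁
      rw [stmtAt_extend_le m_e (by omega)] at hst₂
      exact hs.hinj p q hp hq (by rw [hst₁]; rfl) (by rw [hst₂]; rfl) heq

lemma simcore_step_O {φ ψ : Formula} {d e : Dialogue} {ι : ℕ → ℕ}
    (hs : SimCore φ ψ d e ι) (m_e : Move) {χ : Formula}
    (hatk : m_e.isAttack = true)
    (hnpd : (d.moves.length + 1) % 2 = 1)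
    (hnpe : (e.moves.length + 1) % 2 = 1)
    (hre : m_e.ref % 2 = 0)
    (hst_e : e.stmtAt m_e.ref = some (.form χ))
    (hld : Legal rulesetN (d.extend ⟨m_e.statement, true, ι m_e.ref⟩))
    (hle : Legal rulesetN (e.extend m_e)) :
    SimCore φ ψ (d.extend ⟨m_e.statement, true, ι m_e.ref⟩) (e.extend m_e) ι := by
  have hpd : ParticleOK d := hs.legal_d.1
  have hpe : ParticleOK e := hs.legal_e.1
  set p := m_e.ref with hp
  have hsome : (e.stmtAt p).isSome := by rw [hst_e]; rfl
  have hm := hs.hmap p hre hsome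
  have hst_d : d.stmtAt (ι p) = some (.form χ) := by rw [hm.2.1]; exact hst_e
  have hreb : p ≤ e.moves.length := stmtAt_some_le hst_e
  have hrdb : ι p ≤ d.moves.length := stmtAt_some_le hst_d
  refine ⟨?_, hld, hle, ?_, ?_, ?_, ?_, ?_, ?_⟩
  · exact hs.einit
  · intro χ'
    rw [OA_extend, OA_extend]
    constructor
    · rintro (h | ⟨hpar, hstm⟩)
      · rcases (hs.hOA χ').1 h with h' | h'
        · exact Or.inl (Or.inl h')
        · exact Or.inr h'
      · exact Or.inl (Or.inr ⟨hnpe, hstm⟩)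
    · rintro ((h | ⟨hpar, hstm⟩) | h)
      · exact Or.inl ((hs.hOA χ').2 (Or.inl h))
      · exact Or.inr ⟨hnpd, hstm⟩
      · exact Or.inl ((hs.hOA χ').2 (Or.inr h))
  · intro χ' α
    rw [OAttC_extend hpd hrdb, OAttC_extend hpe hreb]
    constructor
    · rintro (h | ⟨hpar, -, hstm, hst⟩)
      · rcases (hs.hOAtt χ' α).1 h with h' | h'
        · exact Or.inl (Or.inl h')
        · exact Or.inr h'
      · rw [hst_d] at hst
        injection hst with hst; injection hst with hst
        exact Or.inl (Or.inr ⟨hnpe, hatk, hstm, by rw [hst_e, hst]⟩)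
    · rintro ((h | ⟨hpar, -, hstm, hst⟩) | h)
      · exact Or.inl ((hs.hOAtt χ' α).2 (Or.inl h))
      · rw [hst_e] at hst
        injection hst with hst; injection hst with hst
        exact Or.inr ⟨hnpd, rfl, hstm, by rw [hst_d, hst]⟩
      · exact Or.inl ((hs.hOAtt χ' α).2 (Or.inr h))
  · intro χ' α h
    rcases (PAttC_extend hpe hreb χ' α).1 h with h' | ⟨hpar, -, -, -⟩
    · exact hs.hPAtt χ' α h'
    · omega
  · intro _
    by_cases hnil : e.moves = []
    · have hlen : e.moves.length = 0 := by rw [hnil]; rfl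
      have hp0 : p = 0 := by omega
      have hχ : χ = ψ := by
        rw [hp0, stmtAt_zero] at hst_e
        injection hst_e with h'
        injection h' with h'
        rw [← h', hs.einit]
      refine ⟨m_e.statement, e.moves.length + 1, m_e, moveAt_extend_last e m_e, hnpe,
        hatk, rfl, ?_⟩
      rw [stmtAt_extend_le m_e hreb, hst_e, hχ]
    · obtain ⟨β, hβ⟩ := hs.hA5 hnil
      exact ⟨β, (OAttC_extend hpe hreb ψ β).2 (Or.inl hβ)⟩
  · intro q hq hsome'
    rcases Option.isSome_iff_exists.mp hsome' with ⟨s, hst⟩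
    have hb := stmtAt_extend_some_le hst
    have hqle : q ≤ e.moves.length := by omega
    rw [stmtAt_extend_le m_e hqle] at hst ⊢
    have hmq := hs.hmap q hq (by rw [hst]; rfl)
    have hiqle : ι q ≤ d.moves.length := by
      have := hmq.2.1; rw [hst] at this; exact stmtAt_some_le this
    refine ⟨hmq.1, by rw [stmtAt_extend_le _ hiqle]; exact hmq.2.1, ?_⟩
    rw [attackedIn_extend, attackedIn_extend]
    rcases eq_or_ne q p with rfl | hqp
    · constructor
      · intro _; exact Or.inr ⟨hatk, rfl⟩
      · intro _; exact Or.inr ⟨rfl, rfl⟩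
    · have hιne : ι p ≠ ι q := by
        intro hcon
        exact hqp (hs.hinj q p hq hre (by rw [hst]; rfl) hsome hcon.symm)
      constructor
      · rintro (h' | ⟨-, hrf⟩)
        · exact Or.inl (hmq.2.2.1 h')
        · exact absurd hrf.symm (by simpa using hιne.symm)
      · rintro (h' | ⟨-, hrf⟩)
        · exact Or.inl (hmq.2.2.2 h')
        · exact absurd hrf.symm hqp
  · intro q r hq hr hsq hsr heq
    rcases Option.isSome_iff_exists.mp hsq with ⟨s₁, hst₁⟩
    rcases Option.isSome_iff_exists.mp hsr with ⟨s₂, hst₂⟩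
    have hb₁ := stmtAt_extend_some_le hst₁
    have hb₂ := stmtAt_extend_some_le hst₂
    rw [stmtAt_extend_le m_e (by omega)] at hst₁
    rw [stmtAt_extend_le m_e (by omega)] at hst₂
    exact hs.hinj q r hq hr (by rw [hst₁]; rfl) (by rw [hst₂]; rfl) heq

lemma simcore_step_reassert {φ ψ : Formula} {d e : Dialogue} {ι : ℕ → ℕ}
    (hs : SimCore φ ψ d e ι) (m_d : Move)
    (hdef : m_d.isAttack = false)
    (hnpd : (d.moves.length + 1) % 2 = 0)
    (hrd : m_d.ref ≤ d.moves.length)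
    (hld : Legal rulesetN (d.extend m_d)) :
    SimCore φ ψ (d.extend m_d) e ι := by
  have hpd : ParticleOK d := hs.legal_d.1
  refine ⟨hs.einit, hld, hs.legal_e, ?_, ?_, hs.hPAtt, hs.hA5, ?_, hs.hinj⟩
  · intro χ
    rw [OA_extend]
    constructor
    · rintro (h | ⟨hpar, -⟩)
      · exact (hs.hOA χ).1 h
      · omega
    · intro h
      exact Or.inl ((hs.hOA χ).2 h)
  · intro χ α
    rw [OAttC_extend hpd hrd]
    constructor
    · rintro (h | ⟨-, hatk, -, -⟩)
      · exact (hs.hOAtt χ α).1 h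
      · rw [hdef] at hatk; exact absurd hatk (by simp)
    · intro h
      exact Or.inl ((hs.hOAtt χ α).2 h)
  · intro q hq hsome'
    have hmq := hs.hmap q hq hsome'
    rcases Option.isSome_iff_exists.mp hsome' with ⟨s, hst⟩
    have hiqle : ι q ≤ d.moves.length := by
      have := hmq.2.1; rw [hst] at this; exact stmtAt_some_le this
    refine ⟨hmq.1, by rw [stmtAt_extend_le _ hiqle]; exact hmq.2.1, ?_⟩
    rw [attackedIn_extend]
    constructor
    · rintro (h' | ⟨hatk, -⟩)
      · exact hmq.2.2.1 h'
      · rw [hdef] at hatk; exact absurd hatk (by simp)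
    · intro h'
      exact Or.inl (hmq.2.2.2 h')

lemma simcore_step_feed {φ ψ : Formula} {d e : Dialogue} {ι : ℕ → ℕ}
    (hs : SimCore φ ψ d e ι) {c : ℕ} {β : Statement}
    (hc_st : d.stmtAt c = some (.form ψ))
    (hβ : OAttC e ψ β)
    (hcn : ∀ p, p % 2 = 0 → (e.stmtAt p).isSome → ι p ≠ c)
    (hnpd : (d.moves.length + 1) % 2 = 1)
    (hld : Legal rulesetN (d.extend ⟨β, true, c⟩)) :
    SimCore φ ψ (d.extend ⟨β, true, c⟩) e ι := by
  have hpd : ParticleOK d := hs.legal_d.1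
  have hcb : c ≤ d.moves.length := stmtAt_some_le hc_st
  obtain ⟨nβ, mβ, hmvβ, hparβ, hatkβ, hstmβ, hstβ⟩ := hβ
  refine ⟨hs.einit, hld, hs.legal_e, ?_, ?_, hs.hPAtt, hs.hA5, ?_, hs.hinj⟩
  · intro χ
    rw [OA_extend]
    constructor
    · rintro (h | ⟨hpar, hstm⟩)
      · exact (hs.hOA χ).1 h
      · -- the feed statement β was also asserted by O in e
        refine Or.inl ⟨nβ, hparβ, ?_⟩
        rw [stmtAt_of_moveAt hmvβ, hstmβ]
        exact congrArg some hstm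
    · intro h
      exact Or.inl ((hs.hOA χ).2 h)
  · intro χ α
    rw [OAttC_extend hpd hcb]
    constructor
    · rintro (h | ⟨-, -, hstm, hst⟩)
      · exact (hs.hOAtt χ α).1 h
      · rw [hc_st] at hst
        injection hst with hst; injection hst with hst
        refine Or.inl ?_
        rw [← hst, ← hstm]
        exact ⟨nβ, mβ, hmvβ, hparβ, hatkβ, hstmβ, hstβ⟩
    · intro h
      exact Or.inl ((hs.hOAtt χ α).2 h)
  · intro q hq hsome'
    have hmq := hs.hmap q hq hsome'
    rcases Option.isSome_iff_exists.mp hsome' with ⟨s, hst⟩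
    have hiqle : ι q ≤ d.moves.length := by
      have := hmq.2.1; rw [hst] at this; exact stmtAt_some_le this
    refine ⟨hmq.1, by rw [stmtAt_extend_le _ hiqle]; exact hmq.2.1, ?_⟩
    rw [attackedIn_extend]
    constructor
    · rintro (h' | ⟨-, hrf⟩)
      · exact hmq.2.2.1 h'
      · exact absurd hrf.symm (by simpa using hcn q hq hsome')
    · intro h'
      exact Or.inl (hmq.2.2.2 h')

lemma nextPos_extend (d : Dialogue) (m : Move) :
    nextPos (d.extend m) = nextPos d + 1 := by
  simp [nextPos, Dialogue.extend]

/-- The main simulation: a winning strategy for `d` (a dialogue for φ → ψ)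
    yields one for `e` (a dialogue for ψ), given the invariant. -/
lemma sim_main {φ ψ : Formula}
    (hφa : ∀ p, φ ≠ .atom p) (hφn : ∀ χ, φ ≠ .neg χ)
    {d : Dialogue} (h : Win d) :
    ∀ e ι, SimCore φ ψ d e ι →
      (Aligned d e → Win e) ∧ (Mis ψ d e ι → Win e) := by
  induction h with
  | pMove d m hturn hm hC hsub ih =>
    intro e ι hs
    constructor
    · -- aligned: P's turn in both d and e
      intro halign
      have hnpd : (d.moves.length + 1) % 2 = 0 := hturn
      have hnpe : (e.moves.length + 1) % 2 = 0 := by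
        have h1 : nextPos d % 2 = nextPos e % 2 := halign
        rw [nextPos_eq, nextPos_eq] at h1
        omega
      obtain ⟨hok, h10n, h13n⟩ := (legalExt_iff hs.legal_d m).1 hm
      obtain ⟨hlt, hpar, hattc, hdefc⟩ := hok
      have hrodd : m.ref % 2 = 1 := by omega
      have hrle : m.ref ≤ d.moves.length := by omega
      -- D10 witness transfer from d to e
      have hD10e : ∀ p : ℕ, m.statement = .form (.atom p) →
          ∃ j, j < e.moves.length + 1 ∧ j % 2 = 1 ∧
            e.stmtAt j = some (.form (.atom p)) := by
        intro p hstm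
        obtain ⟨j, hj1, hj2, hj3⟩ := h10n hnpd p hstm
        have : OA d (.atom p) := ⟨j, hj2, hj3⟩
        rcases (hs.hOA _).1 this with h' | h'
        · obtain ⟨j₀, hj₀, hst₀⟩ := h'
          exact ⟨j₀, by have := stmtAt_some_le hst₀; omega, hj₀, hst₀⟩
        · exact absurd h'.symm (hφa p)
      cases hA : m.isAttack with
      | true =>
        obtain ⟨χ, hstχ, hatkχ⟩ := hattc hA
        -- kill the case where the attacked formula admits a defense
        have hkill : ∀ s : Statement, Defends χ m.statement s → Win e := by
          intro s hdfd
          exfalso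
          refine lemA hsub (legal_of_legalExt hm)
            ⟨d.moves.length + 1, m, χ, s, moveAt_extend_last d m, hnpd, hA, ?_, hdfd⟩
          rw [stmtAt_extend_le m hrle]
          exact hstχ
        generalize hgen : m.statement = ms at hatkχ
        cases hatkχ with
        | andL a b => exact hkill _ (by rw [hgen]; exact Defends.andL a b)
        | andR a b => exact hkill _ (by rw [hgen]; exact Defends.andR a b)
        | qmark a b => exact hkill _ (by rw [hgen]; exact Defends.orL a b)
        | imp a b => exact hkill _ (by rw [hgen]; exact Defends.imp a b)
        | neg a =>
          -- translate the attack on the negation ¬a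
          have hOAe : OA e (.neg a) := by
            rcases (hs.hOA _).1 ⟨m.ref, hrodd, hstχ⟩ with h' | h'
            · exact h'
            · exact absurd h'.symm (hφn a)
          obtain ⟨j', hj'odd, hj'st⟩ := hOAe
          have hj'le : j' ≤ e.moves.length := stmtAt_some_le hj'st
          set tr : Move := ⟨.form a, true, j'⟩ with htr
          have htr_legal : LegalExt rulesetN e tr := by
            rw [legalExt_iff hs.legal_e]
            refine ⟨⟨by show j' < e.moves.length + 1; omega,
                by show j' % 2 ≠ (e.moves.length + 1) % 2; omega, ?_, ?_⟩, ?_, ?_⟩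
            · intro _
              exact ⟨.neg a, hj'st, Attacks.neg a⟩
            · intro hcon; simp [htr] at hcon
            · intro _ p hstm
              exact hD10e p (hgen.trans hstm)
            · intro _ hcon
              exact absurd hcon (by show ¬ j' % 2 = 0; omega)
          have hs' := simcore_step_P hs m tr (by show Statement.form a = m.statement; rw [hgen])
            hnpd hnpe hrle hj'le hrodd hj'odd
            (legal_of_legalExt hm) (legal_of_legalExt htr_legal)
            (fun _ χ₀ hst₀ => by
              rw [hj'st] at hst₀
              injection hst₀ with h'
              injection h' with h'
              exact ⟨a, h'.symm⟩)
          have halign' : Aligned (d.extend m) (e.extend tr) := by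
            show nextPos (d.extend m) % 2 = nextPos (e.extend tr) % 2
            rw [nextPos_extend, nextPos_extend, nextPos_eq, nextPos_eq]
            omega
          exact PWinningC.pMove e tr (by show (e.moves.length + 1) % 2 = 0; exact hnpe)
            htr_legal trivial ((ih (e.extend tr) _ hs').1 halign')
      | false =>
        obtain ⟨a, χ, hma, haat, hstm, hdfd⟩ := hdefc hA
        rcases (hs.hOAtt χ a.statement).1 ⟨m.ref, a, hma, hrodd, haat, rfl, hstm⟩ with
          hOAtte | ⟨hχeq, haseq⟩
        · -- translatable defense
          obtain ⟨r', b, hmb, hr'odd, hbat, hbst, hbref⟩ := hOAtte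
          have hr'le : r' ≤ e.moves.length := (moveAt_bounds hmb).2
          obtain ⟨σ, hσ⟩ := defends_is_form hdfd
          set tr : Move := ⟨m.statement, false, r'⟩ with htr
          have htr_legal : LegalExt rulesetN e tr := by
            rw [legalExt_iff hs.legal_e]
            refine ⟨⟨by show r' < e.moves.length + 1; omega,
                by show r' % 2 ≠ (e.moves.length + 1) % 2; omega, ?_, ?_⟩, ?_, ?_⟩
            · intro hcon; simp [htr] at hcon
            · intro _
              refine ⟨b, χ, hmb, hbat, hbref, ?_⟩
              rw [hbst]
              exact hdfd
            · intro _ p hstm'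
              exact hD10e p hstm'
            · intro hcon; simp [htr] at hcon
          have hs' := simcore_step_P hs m tr rfl hnpd hnpe hrle hr'le hrodd hr'odd
            (legal_of_legalExt hm) (legal_of_legalExt htr_legal)
            (fun hcon _ _ => by simp [htr] at hcon)
          have halign' : Aligned (d.extend m) (e.extend tr) := by
            show nextPos (d.extend m) % 2 = nextPos (e.extend tr) % 2
            rw [nextPos_extend, nextPos_extend, nextPos_eq, nextPos_eq]
            omega
          exact PWinningC.pMove e tr (by show (e.moves.length + 1) % 2 = 0; exact hnpe)
            htr_legal trivial ((ih (e.extend tr) _ hs').1 halign')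
        · -- the re-assertion of ψ: a garbage move, handled via the Mis mode
          subst hχeq
          rw [haseq] at hdfd
          have hstψ : m.statement = .form ψ := defends_imp_inv hdfd
          have hs' := simcore_step_reassert hs m hA hnpd hrle (legal_of_legalExt hm)
          have hmis' : Mis ψ (d.extend m) e ι := by
            refine ⟨by rw [nextPos_eq]; exact hnpe,
              by rw [nextPos_extend, nextPos_eq]; omega,
              d.moves.length + 1, hnpd, ?_, ?_, ?_⟩
            · rw [stmtAt_extend_last, hstψ]
            · intro hcon
              rcases (attackedIn_extend d m _).1 hcon with h' | ⟨hatk', -⟩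
              · exact absurd (attackedIn_lt hs.legal_d.1 h') (by omega)
              · rw [hA] at hatk'; exact absurd hatk' (by simp)
            · intro p hp hsome
              obtain ⟨s, hst⟩ := Option.isSome_iff_exists.mp hsome
              have hmq := hs.hmap p hp hsome
              have : ι p ≤ d.moves.length := by
                have := hmq.2.1; rw [hst] at this; exact stmtAt_some_le this
              omega
          exact (ih e ι hs').2 hmis'
    · -- misaligned mode is impossible at P's turn in d
      intro hmis
      exfalso
      have h0 : nextPos d % 2 = 0 := hturn
      have h1 := hmis.2.1
      omega
  | oMoves d hturn hsub ih =>
    intro e ι hs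
    have hnpd : (d.moves.length + 1) % 2 = 1 := by
      have : ¬ nextPos d % 2 = 0 := hturn
      rw [nextPos_eq] at this
      omega
    constructor
    · -- aligned: O's turn in both
      intro halign
      have hnpe : (e.moves.length + 1) % 2 = 1 := by
        have h1 : nextPos d % 2 = nextPos e % 2 := halign
        rw [nextPos_eq, nextPos_eq] at h1
        omega
      refine PWinningC.oMoves e (by
        show ¬ nextPos e % 2 = 0
        rw [nextPos_eq]
        omega) ?_
      intro m_e hlegale
      obtain ⟨hoke, h10ne, h13ne⟩ := (legalExt_iff hs.legal_e m_e).1 hlegale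
      obtain ⟨hlte, hpare, hattce, hdefce⟩ := hoke
      have hreven : m_e.ref % 2 = 0 := by omega
      cases hAe : m_e.isAttack with
      | false =>
        -- impossible: all P-attacks in e are on negations, which admit no defense
        exfalso
        obtain ⟨a, χ, hma, haat, hstm, hdfd⟩ := hdefce hAe
        obtain ⟨χ', rfl⟩ := hs.hPAtt χ a.statement ⟨m_e.ref, a, hma, hreven, haat, rfl, hstm⟩
        exact no_defends_neg hdfd
      | true =>
        obtain ⟨χ, hstχ, hatkχ⟩ := hattce hAe
        have hsome : (e.stmtAt m_e.ref).isSome := by rw [hstχ]; rfl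
        have hm := hs.hmap m_e.ref hreven hsome
        have hst_d : d.stmtAt (ι m_e.ref) = some (.form χ) := by
          rw [hm.2.1]; exact hstχ
        have hnotatt_e : ¬ attackedIn e m_e.ref := h13ne hAe hreven
        set fd : Move := ⟨m_e.statement, true, ι m_e.ref⟩ with hfd
        have hbd : ι m_e.ref < d.moves.length + 1 := by
          have := stmtAt_some_le hst_d; omega
        have hpard : (ι m_e.ref) % 2 ≠ (d.moves.length + 1) % 2 := by
          have := hm.1; omega
        have hfd_legal : LegalExt rulesetN d fd := by
          rw [legalExt_iff hs.legal_d]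
          refine ⟨⟨hbd, hpard, ?_, ?_⟩, ?_, ?_⟩
          · intro _
            exact ⟨χ, hst_d, hatkχ⟩
          · intro hcon; simp [hfd] at hcon
          · intro hcon; omega
          · intro _ _
            show ¬ attackedIn d (ι m_e.ref)
            intro hcon
            exact hnotatt_e (hm.2.2.1 hcon)
        have hs' := simcore_step_O hs m_e hAe hnpd hnpe hreven hstχ
          (legal_of_legalExt hfd_legal) (legal_of_legalExt hlegale)
        have halign' : Aligned (d.extend fd) (e.extend m_e) := by
          show nextPos (d.extend fd) % 2 = nextPos (e.extend m_e) % 2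
          rw [nextPos_extend, nextPos_extend, nextPos_eq, nextPos_eq]
          omega
        exact ((ih fd hfd_legal) (e.extend m_e) ι hs').1 halign'
    · -- misaligned: attack the fresh copy of ψ
      intro hmis
      obtain ⟨hnpe0, hnpd1, c, hc_par, hc_st, hc_un, hc_ni⟩ := hmis
      have hnpe0' : (e.moves.length + 1) % 2 = 0 := by rw [← nextPos_eq]; exact hnpe0
      obtain ⟨β, hβ⟩ := hs.hA5 (ne_nil_of_odd_len hnpe0')
      have hattβ : Attacks β ψ := OAttC_attacks hs.legal_e.1 hβ
      set fd : Move := ⟨β, true, c⟩ with hfd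
      have hbd : c < d.moves.length + 1 := by
        have := stmtAt_some_le hc_st; omega
      have hpard : c % 2 ≠ (d.moves.length + 1) % 2 := by omega
      have hfd_legal : LegalExt rulesetN d fd := by
        rw [legalExt_iff hs.legal_d]
        refine ⟨⟨hbd, hpard, ?_, ?_⟩, ?_, ?_⟩
        · intro _
          exact ⟨ψ, hc_st, hattβ⟩
        · intro hcon; simp [hfd] at hcon
        · intro hcon; omega
        · intro _ _
          exact hc_un
      have hs' := simcore_step_feed hs hc_st hβ hc_ni hnpd hfd_legal
      have halign' : Aligned (d.extend fd) e := by
        show nextPos (d.extend fd) % 2 = nextPos e % 2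
        rw [nextPos_extend, nextPos_eq, nextPos_eq]
        omega
      exact ((ih fd hfd_legal) e ι hs').1 halign'

/-- The hard case: if φ is neither an atom nor a negation, N-validity of
    φ → ψ implies N-validity of ψ. -/
lemma hard_case {φ ψ : Formula}
    (hφa : ∀ p, φ ≠ .atom p) (hφn : ∀ χ, φ ≠ .neg χ)
    (h : valid rulesetN (.imp φ ψ)) : valid rulesetN ψ := by
  obtain ⟨leg0, win0⟩ := h
  set d0 : Dialogue := ⟨.imp φ ψ, []⟩ with hd0
  -- O's first move is forced: attack the implication by asserting φ
  set m₁ : Move := ⟨.form φ, true, 0⟩ with hm₁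
  have legal₁ : LegalExt rulesetN d0 m₁ := by
    rw [legalExt_iff leg0]
    refine ⟨⟨by show (0:ℕ) < 0 + 1; omega, by show (0:ℕ) % 2 ≠ (0 + 1) % 2; omega,
        ?_, ?_⟩, ?_, ?_⟩
    · intro _
      exact ⟨.imp φ ψ, stmtAt_zero d0, Attacks.imp φ ψ⟩
    · intro hcon; simp [hm₁] at hcon
    · intro hcon
      exact absurd hcon (by show ¬ (0 + 1) % 2 = 0; omega)
    · intro _ _
      rintro ⟨n, m', hmv, -, -⟩
      have := moveAt_bounds hmv
      simp [hd0] at this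
      omega
  have win1 : Win (d0.extend m₁) := by
    cases win0 with
    | pMove _ m hturn hm hC hsub =>
        exact absurd hturn (by show ¬ (0 + 1) % 2 = 0; omega)
    | oMoves _ hturn hsub => exact hsub m₁ legal₁
  set d1 : Dialogue := d0.extend m₁ with hd1
  have hd1len : d1.moves.length = 1 := rfl
  have hd1st1 : d1.stmtAt 1 = some (.form φ) := rfl
  have hd1mv1 : d1.moveAt 1 = some m₁ := rfl
  cases win1 with
  | oMoves _ hturn hsub =>
      exact absurd (by show (1 + 1) % 2 = 0; omega) hturn
  | pMove _ m hturn2 hm2 hC2 hsub2 =>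
    have legal_d1 : Legal rulesetN d1 := legal_of_legalExt legal₁
    obtain ⟨⟨hlt, hpar, hattc, hdefc⟩, h10n, h13n⟩ := (legalExt_iff legal_d1 m).1 hm2
    rw [hd1len] at hlt hpar
    have hr1 : m.ref = 1 := by omega
    have legal_d2 : Legal rulesetN (d1.extend m) := legal_of_legalExt hm2
    cases hA : m.isAttack with
    | true =>
      exfalso
      obtain ⟨χ, hstχ, hatk⟩ := hattc hA
      rw [hr1, hd1st1] at hstχ
      injection hstχ with hstχ
      injection hstχ with hstχ
      subst hstχ
      have hkill : ∀ s : Statement, Defends φ m.statement s → False := by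
        intro s hdfd
        refine lemA hsub2 legal_d2
          ⟨2, m, φ, s, ?_, by omega, hA, ?_, hdfd⟩
        · exact moveAt_extend_last d1 m
        · rw [hr1, stmtAt_extend_le m (by omega)]
          exact hd1st1
      generalize hgen : m.statement = ms at hatk
      cases hatk with
      | andL a b => exact hkill _ (by rw [hgen]; exact Defends.andL a b)
      | andR a b => exact hkill _ (by rw [hgen]; exact Defends.andR a b)
      | qmark a b => exact hkill _ (by rw [hgen]; exact Defends.orL a b)
      | imp a b => exact hkill _ (by rw [hgen]; exact Defends.imp a b)
      | neg a => exact hφn a rfl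
    | false =>
      obtain ⟨a, χ, hma, haat, hstm', hdfd⟩ := hdefc hA
      rw [hr1, hd1mv1] at hma
      injection hma with hma
      subst hma
      have hm₁ref : m₁.ref = 0 := rfl
      rw [hm₁ref, stmtAt_zero] at hstm'
      injection hstm' with hstm'
      injection hstm' with hstm'
      have hχ : χ = .imp φ ψ := hstm'.symm
      subst hχ
      have hstψ : m.statement = .form ψ := defends_imp_inv hdfd
      -- ψ cannot be an atom (by D10 in the extended dialogue)
      have hψa : ∀ q, ψ ≠ .atom q := by
        intro q hq
        have h10 : D10 (d1.extend m) := legal_d2.2.1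
        have hst2 : (d1.extend m).stmtAt 2 = some (.form (.atom q)) := by
          have := stmtAt_extend_last d1 m
          rw [hd1len] at this
          rw [this, hstψ, hq]
        obtain ⟨j, hj1, hj2, hj3⟩ := h10 2 q (by omega) hst2
        have hj : j = 1 := by omega
        subst hj
        rw [stmtAt_extend_le m (by rw [hd1len]), hd1st1] at hj3
        injection hj3 with h'
        injection h' with h'
        exact hφa q h'
      set e0 : Dialogue := ⟨ψ, []⟩ with he0
      have lege0 : Legal rulesetN e0 := by
        refine ⟨?_, ?_, ?_⟩
        · intro i m' hi
          simp [he0] at hi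
        · intro n p hn hst
          rcases eq_or_ne n 0 with rfl | h0
          · rw [stmtAt_zero] at hst
            injection hst with h'
            injection h' with h'
            exact absurd h' (hψa p)
          · exfalso
            have := stmtAt_some_le hst
            simp [he0] at this
            omega
        · rintro n₁ n₂ r hr ⟨m', hmv, -, -⟩ -
          have := moveAt_bounds hmv
          simp [he0] at this
          omega
      have hd2len : (d1.extend m).moves.length = 2 := rfl
      have hd2st2 : (d1.extend m).stmtAt 2 = some (.form ψ) := by
        have := stmtAt_extend_last d1 m
        rw [hd1len] at this
        rw [this, hstψ]
      have hd2st1 : (d1.extend m).stmtAt 1 = some (.form φ) := by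
        rw [stmtAt_extend_le m (by rw [hd1len])]
        exact hd1st1
      have hd2st0 : (d1.extend m).stmtAt 0 = some (.form (.imp φ ψ)) := stmtAt_zero _
      have hd2mv1 : (d1.extend m).moveAt 1 = some m₁ := by
        rw [moveAt_extend_le m (by rw [hd1len])]
        exact hd1mv1
      have hd2mv2 : (d1.extend m).moveAt 2 = some m := by
        have := moveAt_extend_last d1 m
        rw [hd1len] at this
        exact this
      have hstnone : ∀ j, 3 ≤ j → (d1.extend m).stmtAt j = none := by
        intro j hj
        unfold Dialogue.stmtAt
        rw [if_neg (by omega)]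
        have : (d1.extend m).moves[j-1]? = none := by
          rw [List.getElem?_eq_none]
          rw [hd2len]; omega
        rw [this]; rfl
      have hestnone : ∀ j, 1 ≤ j → e0.stmtAt j = none := by
        intro j hj
        unfold Dialogue.stmtAt
        rw [if_neg (by omega)]
        have : e0.moves[j-1]? = none := by
          rw [List.getElem?_eq_none]
          simp [he0]
        rw [this]; rfl
      have simcore0 : SimCore φ ψ (d1.extend m) e0 (· + 2) := by
        refine ⟨rfl, legal_d2, lege0, ?_, ?_, ?_, ?_, ?_, ?_⟩
        · intro χ'
          constructor
          · rintro ⟨j, hjodd, hst⟩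
            have hjb := stmtAt_some_le hst
            rw [hd2len] at hjb
            have : j = 1 := by omega
            subst this
            rw [hd2st1] at hst
            injection hst with h'
            injection h' with h'
            exact Or.inr h'.symm
          · rintro (⟨j, hjodd, hst⟩ | rfl)
            · exfalso
              have := hestnone j (by omega)
              rw [this] at hst
              cases hst
            · exact ⟨1, by omega, hd2st1⟩
        · intro χ' α
          constructor
          · rintro ⟨n, m', hmv, hodd, hatk', hstm'', hstref⟩
            have hnb := moveAt_bounds hmv
            rw [hd2len] at hnb
            have : n = 1 := by omega
            subst this
            rw [hd2mv1] at hmv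
            injection hmv with hmv
            subst hmv
            rw [hm₁ref, hd2st0] at hstref
            injection hstref with h'
            injection h' with h'
            exact Or.inr ⟨h'.symm, hstm''.symm⟩
          · rintro (⟨n, m', hmv, hodd, -, -, -⟩ | ⟨rfl, rfl⟩)
            · exfalso
              have := moveAt_bounds hmv
              simp [he0] at this
              omega
            · exact ⟨1, m₁, hd2mv1, by omega, rfl, rfl, by rw [hm₁ref, hd2st0]⟩
        · rintro χ' α ⟨n, m', hmv, -, -, -, -⟩
          exfalso
          have := moveAt_bounds hmv
          simp [he0] at this
          omega
        · intro hcon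
          exact absurd rfl hcon
        · intro p hp hsome
          obtain ⟨s, hst⟩ := Option.isSome_iff_exists.mp hsome
          have hpb := stmtAt_some_le hst
          have hp0 : p = 0 := by simp [he0] at hpb; omega
          subst hp0
          refine ⟨by omega, ?_, ?_⟩
          · rw [hd2st2, stmtAt_zero]
          · constructor
            · rintro ⟨n, m', hmv, hatk', href⟩
              exfalso
              obtain ⟨hnb1, hnb2⟩ := moveAt_bounds hmv
              rw [hd2len] at hnb2
              interval_cases n
              · rw [hd2mv1] at hmv
                injection hmv with hmv
                subst hmv
                rw [hm₁ref] at href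
                omega
              · rw [hd2mv2] at hmv
                injection hmv with hmv
                subst hmv
                rw [hA] at hatk'
                cases hatk'
            · rintro ⟨n, m', hmv, -, -⟩
              have := moveAt_bounds hmv
              simp [he0] at this
              omega
        · intro p q hp hq hsp hsq heq
          omega
      have halign0 : Aligned (d1.extend m) e0 := by
        show nextPos (d1.extend m) % 2 = nextPos e0 % 2
        rw [nextPos_eq, nextPos_eq, hd2len]
        simp [he0]
      exact ⟨lege0, (sim_main hφa hφn hsub2 e0 _ simcore0).1 halign0⟩

end Aux

/-- (Characterization of N-valid implications) If φ → ψ is N-valid, then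
either ψ is N-valid, or φ is atomic, or φ is a negation. -/
theorem N_implication_characterization (φ ψ : Formula)
    (h : valid rulesetN (.imp φ ψ)) :
    valid rulesetN ψ ∨ (∃ p, φ = .atom p) ∨ (∃ χ, φ = .neg χ) := by
  cases φ with
  | atom p => exact Or.inr (Or.inl ⟨p, rfl⟩)
  | neg χ => exact Or.inr (Or.inr ⟨χ, rfl⟩)
  | and a b =>
      exact Or.inl (hard_case (fun _ hc => by cases hc) (fun _ hc => by cases hc) h)
  | or a b =>
      exact Or.inl (hard_case (fun _ hc => by cases hc) (fun _ hc => by cases hc) h)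
  | imp a b =>
      exact Or.inl (hard_case (fun _ hc => by cases hc) (fun _ hc => by cases hc) h)

end LorenzenDialogues
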